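/- Given integers n, m ≥ 3, indices j_i, j_o, and reals t, r, R > 0 satisfying R·(e^{2πi j_o/m} + t·(e^{2πi(j_o+1)/m} − e^{2πi j_o/m})) = r·e^{2πi j_i/n}, it follows that R/r = cos(π(2 j_i m − (2 j_o + 1) n)/(n m)) / cos(π/m). -/

import Mathlib

open Real Complex

/-- If the point with parameter `t` on edge `j_o` of the regular `m`-gon with
circumradius `R` in standard position coincides with vertex `j_i` of the regular
`n`-gon with circumradius `r` in standard position, then
`R/r = cos(π(2 j_i m − (2 j_o + 1) n)/(n m)) / cos(π/m)`. -/
theorem stmt_1 (n m : ℕ) (hn : 3 ≤ n) (hm : 3 ≤ m) (ji jo : ℤ) (t r R : ℝ)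
    (ht0 : 0 ≤ t) (ht1 : t ≤ 1) (hr : 0 < r) (hR : 0 < R)
    (heq : (R : ℂ) * (Complex.exp (2 * Real.pi * Complex.I * jo / m)
        + (t : ℂ) * (Complex.exp (2 * Real.pi * Complex.I * (jo + 1) / m)
          - Complex.exp (2 * Real.pi * Complex.I * jo / m)))
      = (r : ℂ) * Complex.exp (2 * Real.pi * Complex.I * ji / n)) :
    R / r = Real.cos (Real.pi * (2 * ji * m - (2 * jo + 1) * n) / (n * m))
        / Real.cos (Real.pi / m) := by
  have hm0 : (m : ℝ) ≠ 0 := by positivity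
  have hn0 : (n : ℝ) ≠ 0 := by positivity
  set θ : ℝ := Real.pi * (2 * ji * m - (2 * jo + 1) * n) / (n * m) with hθ
  set φ : ℝ := Real.pi * (2 * jo + 1) / m with hφ
  -- rewrite exponents
  have e1 : (2 * (Real.pi : ℂ) * Complex.I * jo / m) = ((2 * Real.pi * jo / m : ℝ) : ℂ) * Complex.I := by
    push_cast; ring
  have e2 : (2 * (Real.pi : ℂ) * Complex.I * (jo + 1) / m) = ((2 * Real.pi * (jo + 1) / m : ℝ) : ℂ) * Complex.I := by
    push_cast; ring
  have e3 : (2 * (Real.pi : ℂ) * Complex.I * ji / n) = ((2 * Real.pi * ji / n : ℝ) : ℂ) * Complex.I := by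
    push_cast; ring
  rw [e1, e2, e3] at heq
  have h2 := congrArg (· * Complex.exp (((-φ : ℝ) : ℂ) * Complex.I)) heq
  have mulrw : ∀ a : ℝ, Complex.exp ((a : ℂ) * Complex.I) * Complex.exp (((-φ : ℝ) : ℂ) * Complex.I)
      = Complex.exp (((a - φ : ℝ) : ℂ) * Complex.I) := by
    intro a
    rw [← Complex.exp_add]
    congr 1
    push_cast; ring
  have h3 : (R : ℂ) * (Complex.exp (((2 * Real.pi * jo / m - φ : ℝ) : ℂ) * Complex.I)
      + (t : ℂ) * (Complex.exp (((2 * Real.pi * (jo + 1) / m - φ : ℝ) : ℂ) * Complex.I)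
        - Complex.exp (((2 * Real.pi * jo / m - φ : ℝ) : ℂ) * Complex.I)))
      = (r : ℂ) * Complex.exp (((2 * Real.pi * ji / n - φ : ℝ) : ℂ) * Complex.I) := by
    rw [← mulrw, ← mulrw, ← mulrw]
    linear_combination h2
  have a1 : 2 * Real.pi * jo / m - φ = -(Real.pi / m) := by
    rw [hφ]; ring
  have a2 : 2 * Real.pi * (jo + 1) / m - φ = Real.pi / m := by
    rw [hφ]; ring
  have a3 : 2 * Real.pi * ji / n - φ = θ := by
    rw [hθ, hφ]; field_simp
  rw [a1, a2, a3] at h3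
  have h4 := congrArg Complex.re h3
  simp only [Complex.mul_re, Complex.add_re, Complex.sub_re, Complex.mul_im, Complex.add_im,
    Complex.sub_im, Complex.exp_ofReal_mul_I_re, Complex.exp_ofReal_mul_I_im,
    Complex.ofReal_re, Complex.ofReal_im, Real.cos_neg, Real.sin_neg] at h4
  have key : R * Real.cos (Real.pi / m) = r * Real.cos θ := by linarith [h4]
  have hcos : 0 < Real.cos (Real.pi / m) := by
    apply Real.cos_pos_of_mem_Ioo
    constructor
    · have : 0 < Real.pi / m := by positivity
      linarith [Real.pi_pos]
    · have h3m : (3 : ℝ) ≤ m := by exact_mod_cast hm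
      have : Real.pi / m ≤ Real.pi / 3 := by
        apply div_le_div_of_nonneg_left Real.pi_pos.le (by norm_num) h3m
      linarith [Real.pi_pos]
  rw [div_eq_div_iff hr.ne' hcos.ne']
  linarith [key]
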